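/- For 1 < r < 2 there exists a constant c > 0 such that for all real numbers x₁, x₂ not both zero: (|x₂|^{r-2}·x₂ − |x₁|^{r-2}·x₁)·(x₂ − x₁) ≥ c·(|x₂| + |x₁|)^{r-2}·|x₂ − x₁|². -/

import Mathlib

private lemma rpow_mul_self_eq (r x : ℝ) (hr1 : 1 < r) (hr2 : r < 2) (hx : 0 ≤ x) :
    x ^ (r - 2) * x = x ^ (r - 1) := by
  rcases hx.eq_or_lt with h | h
  · rw [← h, Real.zero_rpow (by linarith : r - 2 ≠ 0),
      Real.zero_rpow (by linarith : r - 1 ≠ 0), mul_zero]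
  · rw [show r - 1 = r - 2 + 1 by ring, Real.rpow_add_one h.ne']

private lemma key_half (r : ℝ) (hr1 : 1 < r) (hr2 : r < 2) (x₁ x₂ : ℝ)
    (h1 : x₁ ≤ x₂) (h2 : 0 ≤ x₁ + x₂) (h : ¬(x₁ = 0 ∧ x₂ = 0)) :
    (|x₂| ^ (r - 2) * x₂ - |x₁| ^ (r - 2) * x₁) * (x₂ - x₁) ≥
      (r - 1) / 2 * (|x₂| + |x₁|) ^ (r - 2) * |x₂ - x₁| ^ (2 : ℝ) := by
  have hb : 0 < x₂ := by
    rcases (by linarith : (0:ℝ) ≤ x₂).eq_or_lt with hz | hz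
    · exact absurd ⟨by linarith, hz.symm⟩ h
    · exact hz
  have e2 : |x₂ - x₁| ^ (2 : ℝ) = (x₂ - x₁) ^ 2 := by
    rw [show (2:ℝ) = ((2:ℕ):ℝ) by norm_num, Real.rpow_natCast, sq_abs]
  rw [e2, abs_of_pos hb]
  rcases le_or_gt 0 x₁ with hx1 | hx1
  · -- both nonnegative
    rw [abs_of_nonneg hx1, rpow_mul_self_eq r x₂ hr1 hr2 hb.le,
      rpow_mul_self_eq r x₁ hr1 hr2 hx1]
    -- Bernoulli : (x₁/x₂)^(r-1) ≤ 1 + (r-1) * (x₁/x₂ - 1)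
    have hber := rpow_one_add_le_one_add_mul_self (s := x₁ / x₂ - 1)
      (by have : 0 ≤ x₁ / x₂ := div_nonneg hx1 hb.le; linarith)
      (p := r - 1) (by linarith) (by linarith)
    rw [show 1 + (x₁ / x₂ - 1) = x₁ / x₂ by ring] at hber
    have hdiv : (x₁ / x₂) ^ (r - 1) = x₁ ^ (r - 1) / x₂ ^ (r - 1) :=
      Real.div_rpow hx1 hb.le (r - 1)
    have hx2r : x₂ ^ (r - 1) = x₂ ^ (r - 2) * x₂ := (rpow_mul_self_eq r x₂ hr1 hr2 hb.le).symm
    have hx2pos : 0 < x₂ ^ (r - 1) := Real.rpow_pos_of_pos hb _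
    have hA : x₁ ^ (r - 1) ≤ x₂ ^ (r - 1) + (r - 1) * x₂ ^ (r - 2) * (x₁ - x₂) := by
      have := mul_le_mul_of_nonneg_left hber hx2pos.le
      rw [hdiv] at this
      have e1 : x₂ ^ (r - 1) * (x₁ ^ (r - 1) / x₂ ^ (r - 1)) = x₁ ^ (r - 1) := by
        field_simp
      have e3 : x₂ ^ (r - 1) * (1 + (r - 1) * (x₁ / x₂ - 1)) =
          x₂ ^ (r - 1) + (r - 1) * x₂ ^ (r - 2) * (x₁ - x₂) := by
        rw [hx2r]; field_simp
      rw [e1, e3] at this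
      exact this
    have hB : (x₂ + x₁) ^ (r - 2) ≤ x₂ ^ (r - 2) :=
      Real.rpow_le_rpow_of_nonpos hb (by linarith) (by linarith)
    have hBpos : 0 < (x₂ + x₁) ^ (r - 2) := Real.rpow_pos_of_pos (by linarith) _
    have hsub : 0 ≤ x₂ - x₁ := by linarith
    have hPpos : 0 < x₂ ^ (r - 2) := Real.rpow_pos_of_pos hb _
    have F1 : (r - 1) / 2 * ((x₂ + x₁) ^ (r - 2) * (x₂ - x₁) ^ 2) ≤
        (r - 1) / 2 * (x₂ ^ (r - 2) * (x₂ - x₁) ^ 2) :=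
      mul_le_mul_of_nonneg_left
        (mul_le_mul_of_nonneg_right hB (sq_nonneg (x₂ - x₁))) (by linarith)
    have F2 := mul_le_mul_of_nonneg_right hA hsub
    have F3 : 0 ≤ (r - 1) / 2 * (x₂ ^ (r - 2) * (x₂ - x₁) ^ 2) :=
      mul_nonneg (by linarith) (by positivity)
    nlinarith [F1, F2, F3]
  · -- x₁ < 0 < x₂
    rw [abs_of_neg hx1]
    have ha : 0 < -x₁ := by linarith
    have hfa : (-x₁) ^ (r - 2) * x₁ = -((-x₁) ^ (r - 1)) := by
      have := rpow_mul_self_eq r (-x₁) hr1 hr2 ha.le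
      nlinarith [this]
    rw [hfa]
    have hpos : 0 < x₂ + -x₁ := by linarith
    have hsum : (x₂ + -x₁) ^ (r - 2) * (x₂ + -x₁) = (x₂ + -x₁) ^ (r - 1) :=
      rpow_mul_self_eq r (x₂ + -x₁) hr1 hr2 hpos.le
    -- (x₂ - x₁)^(r-1) ≤ 2 * x₂^(r-1)
    have h2b : (x₂ + -x₁) ^ (r - 1) ≤ 2 * x₂ ^ (r - 1) := by
      have hle : (x₂ + -x₁) ^ (r - 1) ≤ (2 * x₂) ^ (r - 1) :=
        Real.rpow_le_rpow hpos.le (by linarith) (by linarith)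
      have hmul : (2 * x₂) ^ (r - 1) = (2:ℝ) ^ (r - 1) * x₂ ^ (r - 1) :=
        Real.mul_rpow (by norm_num) hb.le
      have h2le : (2:ℝ) ^ (r - 1) ≤ 2 := by
        have := Real.rpow_le_rpow_of_exponent_le (by norm_num : (1:ℝ) ≤ 2)
          (by linarith : r - 1 ≤ 1)
        rwa [Real.rpow_one] at this
      have hx2pos : 0 < x₂ ^ (r - 1) := Real.rpow_pos_of_pos hb _
      nlinarith
    have hx2pos : 0 < x₂ ^ (r - 1) := Real.rpow_pos_of_pos hb _
    have hapos : 0 < (-x₁) ^ (r - 1) := Real.rpow_pos_of_pos ha _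
    -- main chain
    have hkey : (r - 1) / 2 * ((x₂ + -x₁) ^ (r - 2) * (x₂ + -x₁)) ≤ x₂ ^ (r - 1) := by
      rw [hsum]
      nlinarith [Real.rpow_pos_of_pos hpos (r - 1)]
    have hLB : (x₂ ^ (r - 2) * x₂ - -((-x₁) ^ (r - 1))) * (x₂ - x₁) =
        (x₂ ^ (r - 1) + (-x₁) ^ (r - 1)) * (x₂ + -x₁) := by
      rw [rpow_mul_self_eq r x₂ hr1 hr2 hb.le]; ring
    rw [hLB]
    have : (r - 1) / 2 * (x₂ + -x₁) ^ (r - 2) * (x₂ - x₁) ^ 2 =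
        ((r - 1) / 2 * ((x₂ + -x₁) ^ (r - 2) * (x₂ + -x₁))) * (x₂ + -x₁) := by
      ring
    rw [this]
    have := mul_le_mul_of_nonneg_right hkey hpos.le
    nlinarith

/-- For `1 < r < 2` there exists `c > 0` such that for all real `x₁ x₂` not both zero,
`(|x₂|^(r-2)·x₂ − |x₁|^(r-2)·x₁)·(x₂ − x₁) ≥ c·(|x₂|+|x₁|)^(r-2)·|x₂−x₁|²`. -/
theorem stmt_1 (r : ℝ) (hr1 : 1 < r) (hr2 : r < 2) :
    ∃ c : ℝ, 0 < c ∧ ∀ x₁ x₂ : ℝ, ¬(x₁ = 0 ∧ x₂ = 0) →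
      (|x₂| ^ (r - 2) * x₂ - |x₁| ^ (r - 2) * x₁) * (x₂ - x₁) ≥
        c * (|x₂| + |x₁|) ^ (r - 2) * |x₂ - x₁| ^ (2 : ℝ) := by
  refine ⟨(r - 1) / 2, by linarith, fun x₁ x₂ h => ?_⟩
  rcases le_total x₁ x₂ with hle | hle <;> rcases le_total 0 (x₁ + x₂) with hs | hs
  · exact key_half r hr1 hr2 x₁ x₂ hle hs h
  · have hh := key_half r hr1 hr2 (-x₂) (-x₁) (by linarith) (by linarith)
      (by rintro ⟨a, b⟩; exact h ⟨by linarith, by linarith⟩)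
    simp only [abs_neg] at hh
    rw [show -x₁ - -x₂ = x₂ - x₁ by ring, add_comm |x₁| |x₂|] at hh
    linarith [hh]
  · have hh := key_half r hr1 hr2 x₂ x₁ hle (by linarith)
      (by rintro ⟨a, b⟩; exact h ⟨b, a⟩)
    rw [show x₁ - x₂ = -(x₂ - x₁) by ring, abs_neg, add_comm |x₁| |x₂|] at hh
    nlinarith [hh]
  · have hh := key_half r hr1 hr2 (-x₁) (-x₂) (by linarith) (by linarith)
      (by rintro ⟨a, b⟩; exact h ⟨by linarith, by linarith⟩)
    simp only [abs_neg] at hh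
    rw [show -x₂ - -x₁ = -(x₂ - x₁) by ring, abs_neg] at hh
    nlinarith [hh]
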